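/- Key chain inequality from the coverage proof: with K ∼ Σ_k w̃_k δ_k (finite index set 𝒦, weights summing to 1), and events E_k (for each index k) measurable with respect to random vectors V(Z^k), where K is drawn independently of the V's: P(K ∈ S(V(Z^K))) = Σ_k w̃_k P(k ∈ S(V(Z^k))) ≤ Σ_k w̃_k [P(k ∈ S(V(Z))) + d_TV(V(Z), V(Z^k))] = E[Σ_{k ∈ S(V(Z))} w̃_k] + Σ_k w̃_k d_TV(V(Z), V(Z^k)) ≤ α + Σ_k w̃_k d_TV(V(Z), V(Z^k)). -/

import Mathlib

open MeasureTheory Finset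

/-- Weighted (1−α)-quantile of the discrete distribution `Σ_k w k δ_{r k}`. -/
noncomputable def Qw {ι : Type*} [Fintype ι] (w : ι → ℝ) (α : ℝ) (r : ι → ℝ) : ℝ :=
  open Classical in
  sInf {t : ℝ | 1 - α ≤ ∑ k, if r k ≤ t then w k else 0}

/-- The set of "strange" indices of a vector `r`. -/
def strangeSet {ι : Type*} [Fintype ι] (w : ι → ℝ) (α : ℝ) (r : ι → ℝ) : Set ι :=
  {k | Qw w α r < r k}

/-- Total variation distance between two measures. -/
noncomputable def tvDist {β : Type*} [MeasurableSpace β] (P Q : Measure β) : ℝ :=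
  ⨆ A : {s : Set β // MeasurableSet s}, |(P A.1).toReal - (Q A.1).toReal|

section Aux

variable {ι : Type*} [Fintype ι]

/-- For any `t` in the superlevel set, there is an index `j` with `r j ≤ t` having the same
cumulative weight. -/
lemma exists_eq_F {w r : ι → ℝ} {t α : ℝ} (hα1 : α < 1)
    (ht : 1 - α ≤ ∑ k, if r k ≤ t then w k else 0) :
    ∃ j, r j ≤ t ∧ (∑ k, if r k ≤ r j then w k else 0) = ∑ k, if r k ≤ t then w k else 0 := by
  have hpos : (0:ℝ) < 1 - α := by linarith
  by_cases hne : ∃ j, r j ≤ t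
  · obtain ⟨j0, hj0⟩ := hne
    obtain ⟨j, hjmem, hjmax⟩ :=
      Finset.exists_max_image (univ.filter fun j => r j ≤ t) r ⟨j0, by simp [hj0]⟩
    simp only [mem_filter, mem_univ, true_and] at hjmem hjmax
    refine ⟨j, hjmem, ?_⟩
    refine Finset.sum_congr rfl fun k _ => ?_
    congr 1
    apply propext
    exact ⟨fun h => h.trans hjmem, fun h => hjmax k h⟩
  · exfalso
    push_neg at hne
    have hz : (∑ k, if r k ≤ t then w k else 0) = 0 :=
      Finset.sum_eq_zero fun k _ => by simp [not_le.mpr (hne k)]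
    rw [hz] at ht
    linarith

lemma Qw_isLeast (w : ι → ℝ) (hsum : ∑ k, w k = 1) {α : ℝ} (hα0 : 0 < α) (hα1 : α < 1)
    (r : ι → ℝ) :
    IsLeast {t : ℝ | 1 - α ≤ ∑ k, if r k ≤ t then w k else 0} (Qw w α r) := by
  have hne : Nonempty ι := by
    by_contra h
    rw [not_nonempty_iff] at h
    rw [Finset.univ_eq_empty, Finset.sum_empty] at hsum
    linarith
  obtain ⟨jmax, -, hjmax⟩ := Finset.exists_max_image (univ : Finset ι) r univ_nonempty
  have hGne : (univ.filter fun j => 1 - α ≤ ∑ k, if r k ≤ r j then w k else 0).Nonempty := by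
    refine ⟨jmax, mem_filter.mpr ⟨mem_univ _, ?_⟩⟩
    have : (∑ k, if r k ≤ r jmax then w k else 0) = ∑ k, w k :=
      Finset.sum_congr rfl fun k _ => if_pos (hjmax k (mem_univ k))
    rw [this, hsum]; linarith
  set G := univ.filter fun j => 1 - α ≤ ∑ k, if r k ≤ r j then w k else 0 with hGdef
  have hleast : IsLeast {t : ℝ | 1 - α ≤ ∑ k, if r k ≤ t then w k else 0} (G.inf' hGne r) := by
    constructor
    · obtain ⟨j', hj', hj'eq⟩ := Finset.exists_mem_eq_inf' hGne r
      rw [hj'eq]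
      exact (mem_filter.mp hj').2
    · intro t ht
      obtain ⟨j', hj'le, hj'eq⟩ := exists_eq_F hα1 ht
      have hj'G : j' ∈ G := mem_filter.mpr ⟨mem_univ _, by rw [hj'eq]; exact ht⟩
      exact le_trans (Finset.inf'_le r hj'G) hj'le
  have hQ : Qw w α r = G.inf' hGne r := hleast.csInf_eq
  rw [show Qw w α r = G.inf' hGne r from hQ]
  exact hleast

/-- Deterministic bound: the total weight of strange indices is at most `α`. -/
lemma strange_sum_le (w : ι → ℝ) (hsum : ∑ k, w k = 1) {α : ℝ} (hα0 : 0 < α) (hα1 : α < 1)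
    (r : ι → ℝ) :
    ∑ k, (if Qw w α r < r k then w k else 0) ≤ α := by
  have h1 := (Qw_isLeast w hsum hα0 hα1 r).1
  simp only [Set.mem_setOf_eq] at h1
  have h2 : (∑ k, if r k ≤ Qw w α r then w k else 0) +
      (∑ k, if Qw w α r < r k then w k else 0) = 1 := by
    rw [← Finset.sum_add_distrib, ← hsum]
    refine Finset.sum_congr rfl fun k _ => ?_
    by_cases h : r k ≤ Qw w α r
    · simp [h, not_lt.mpr h]
    · simp [h, lt_of_not_ge h]
  linarith

lemma Qw_lt_iff (w : ι → ℝ) (hsum : ∑ k, w k = 1) {α : ℝ} (hα0 : 0 < α) (hα1 : α < 1)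
    (r : ι → ℝ) (c : ℝ) :
    Qw w α r < c ↔ ∃ j, 1 - α ≤ (∑ k, if r k ≤ r j then w k else 0) ∧ r j < c := by
  obtain ⟨hmem, hlb⟩ := Qw_isLeast w hsum hα0 hα1 r
  simp only [Set.mem_setOf_eq] at hmem
  constructor
  · intro h
    obtain ⟨j, hj1, hj2⟩ := exists_eq_F hα1 hmem
    exact ⟨j, by rw [hj2]; exact hmem, lt_of_le_of_lt hj1 h⟩
  · rintro ⟨j, h1, h2⟩
    exact lt_of_le_of_lt (hlb h1) h2

lemma measurable_strange (w : ι → ℝ) (hsum : ∑ k, w k = 1) {α : ℝ} (hα0 : 0 < α) (hα1 : α < 1)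
    (k : ι) :
    MeasurableSet {r : ι → ℝ | Qw w α r < r k} := by
  have hset : {r : ι → ℝ | Qw w α r < r k} =
      ⋃ j, ({r : ι → ℝ | 1 - α ≤ ∑ k', if r k' ≤ r j then w k' else 0} ∩
        {r : ι → ℝ | r j < r k}) := by
    ext r
    simp only [Set.mem_setOf_eq, Set.mem_iUnion, Set.mem_inter_iff]
    exact Qw_lt_iff w hsum hα0 hα1 r (r k)
  rw [hset]
  refine MeasurableSet.iUnion fun j => MeasurableSet.inter ?_ ?_
  · refine measurableSet_le measurable_const (Finset.measurable_sum _ fun k' _ => ?_)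
    exact Measurable.ite
      (measurableSet_le (measurable_pi_apply k') (measurable_pi_apply j))
      measurable_const measurable_const
  · exact measurableSet_lt (measurable_pi_apply j) (measurable_pi_apply k)

lemma tv_bound {β : Type*} [MeasurableSpace β] (P Q : Measure β)
    [IsProbabilityMeasure P] [IsProbabilityMeasure Q]
    {A : Set β} (hA : MeasurableSet A) :
    (Q A).toReal ≤ (P A).toReal + tvDist P Q := by
  have hb : BddAbove (Set.range fun A : {s : Set β // MeasurableSet s} =>
      |(P A.1).toReal - (Q A.1).toReal|) := by
    refine ⟨1, ?_⟩
    rintro x ⟨B, rfl⟩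
    have h1 : (P B.1).toReal ≤ 1 := by
      have := ENNReal.toReal_mono ENNReal.one_ne_top (prob_le_one (μ := P) (s := B.1))
      simpa using this
    have h2 : (Q B.1).toReal ≤ 1 := by
      have := ENNReal.toReal_mono ENNReal.one_ne_top (prob_le_one (μ := Q) (s := B.1))
      simpa using this
    have h3 : (0:ℝ) ≤ (P B.1).toReal := ENNReal.toReal_nonneg
    have h4 : (0:ℝ) ≤ (Q B.1).toReal := ENNReal.toReal_nonneg
    rw [abs_sub_le_iff]
    constructor <;> linarith
  have hle := le_ciSup hb (⟨A, hA⟩ : {s : Set β // MeasurableSet s})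
  have habs : (Q A).toReal - (P A).toReal ≤ |(P A).toReal - (Q A).toReal| := by
    rw [abs_sub_comm]; exact le_abs_self _
  unfold tvDist
  linarith

end Aux

/-- Key chain inequality from the coverage proof:
`P(K ∈ S(V(Z^K))) ≤ α + Σ_k w̃_k · d_TV(V(Z), V(Z^k))`. -/
theorem strange_point_chain_inequality {ι Ω : Type*} [Fintype ι]
    [MeasurableSpace ι] [MeasurableSpace Ω]
    (μ : Measure Ω) [IsProbabilityMeasure μ]
    (w : ι → ℝ) (hw : ∀ k, 0 ≤ w k) (hsum : ∑ k, w k = 1)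
    (α : ℝ) (hα0 : 0 < α) (hα1 : α < 1)
    (K : Ω → ι) (hK : Measurable K)
    (V : ι → Ω → (ι → ℝ)) (hV : ∀ k, Measurable (V k))
    (V₀ : Ω → (ι → ℝ)) (hV₀ : Measurable V₀)
    (hKdist : ∀ k, μ {ω | K ω = k} = ENNReal.ofReal (w k))
    (hKindep : ∀ k : ι,
      (μ ({ω | K ω = k} ∩ {ω | k ∈ strangeSet w α (V k ω)})).toReal =
        w k * (μ {ω | k ∈ strangeSet w α (V k ω)}).toReal) :
    (μ {ω | K ω ∈ strangeSet w α (V (K ω) ω)}).toReal ≤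
      α + ∑ k, w k * tvDist (μ.map V₀) (μ.map (V k)) := by
  classical
  set A : ι → Set (ι → ℝ) := fun k => {r : ι → ℝ | Qw w α r < r k} with hAdef
  have hA : ∀ k, MeasurableSet (A k) := fun k => measurable_strange w hsum hα0 hα1 k
  have hAiff : ∀ (k : ι) (r : ι → ℝ), k ∈ strangeSet w α r ↔ r ∈ A k := fun k r => Iff.rfl
  -- the event sets
  have hsetEq : ∀ k : ι, {ω | k ∈ strangeSet w α (V k ω)} = V k ⁻¹' (A k) := fun k => rfl
  -- Step 1: union bound
  have hsub : {ω | K ω ∈ strangeSet w α (V (K ω) ω)} ⊆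
      ⋃ k, ({ω | K ω = k} ∩ {ω | k ∈ strangeSet w α (V k ω)}) := by
    intro ω hω
    exact Set.mem_iUnion.mpr ⟨K ω, rfl, hω⟩
  have hstep1 : μ {ω | K ω ∈ strangeSet w α (V (K ω) ω)} ≤
      ∑ k, μ ({ω | K ω = k} ∩ {ω | k ∈ strangeSet w α (V k ω)}) := by
    calc μ {ω | K ω ∈ strangeSet w α (V (K ω) ω)}
        ≤ μ (⋃ k, ({ω | K ω = k} ∩ {ω | k ∈ strangeSet w α (V k ω)})) := measure_mono hsub
      _ ≤ ∑' k, μ ({ω | K ω = k} ∩ {ω | k ∈ strangeSet w α (V k ω)}) := measure_iUnion_le _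
      _ = ∑ k, μ ({ω | K ω = k} ∩ {ω | k ∈ strangeSet w α (V k ω)}) := tsum_fintype _
  have hfin : ∀ k : ι, μ ({ω | K ω = k} ∩ {ω | k ∈ strangeSet w α (V k ω)}) ≠ ⊤ :=
    fun k => measure_ne_top μ _
  have hstep1' : (μ {ω | K ω ∈ strangeSet w α (V (K ω) ω)}).toReal ≤
      ∑ k, (μ ({ω | K ω = k} ∩ {ω | k ∈ strangeSet w α (V k ω)})).toReal := by
    have hsumfin : (∑ k, μ ({ω | K ω = k} ∩ {ω | k ∈ strangeSet w α (V k ω)})) ≠ ⊤ :=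
      ENNReal.sum_ne_top.mpr fun k _ => hfin k
    calc (μ {ω | K ω ∈ strangeSet w α (V (K ω) ω)}).toReal
        ≤ (∑ k, μ ({ω | K ω = k} ∩ {ω | k ∈ strangeSet w α (V k ω)})).toReal :=
          ENNReal.toReal_mono hsumfin hstep1
      _ = ∑ k, (μ ({ω | K ω = k} ∩ {ω | k ∈ strangeSet w α (V k ω)})).toReal :=
          ENNReal.toReal_sum fun k _ => hfin k
  -- Step 2: independence
  have hstep2 : ∀ k : ι, (μ ({ω | K ω = k} ∩ {ω | k ∈ strangeSet w α (V k ω)})).toReal =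
      w k * (μ (V k ⁻¹' (A k))).toReal := fun k => hKindep k
  -- probability measures on the image
  haveI : ∀ k : ι, IsProbabilityMeasure (μ.map (V k)) :=
    fun k => Measure.isProbabilityMeasure_map (hV k).aemeasurable
  haveI : IsProbabilityMeasure (μ.map V₀) := Measure.isProbabilityMeasure_map hV₀.aemeasurable
  -- Step 3: TV bound per index
  have hstep3 : ∀ k : ι, (μ (V k ⁻¹' (A k))).toReal ≤
      (μ (V₀ ⁻¹' (A k))).toReal + tvDist (μ.map V₀) (μ.map (V k)) := by
    intro k
    have h1 : μ.map (V k) (A k) = μ (V k ⁻¹' (A k)) := Measure.map_apply (hV k) (hA k)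
    have h2 : μ.map V₀ (A k) = μ (V₀ ⁻¹' (A k)) := Measure.map_apply hV₀ (hA k)
    have := tv_bound (μ.map V₀) (μ.map (V k)) (hA k)
    rw [h1, h2] at this
    exact this
  -- Step 4: the expected strange mass is at most α
  have hint : ∀ k : ι, Integrable ((V₀ ⁻¹' (A k)).indicator fun _ => w k) μ :=
    fun k => (integrable_const (w k)).indicator (hV₀ (hA k))
  have hkey : ∑ k, w k * (μ (V₀ ⁻¹' (A k))).toReal ≤ α := by
    have h1 : ∀ k : ι, ∫ ω, (V₀ ⁻¹' (A k)).indicator (fun _ => w k) ω ∂μ =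
        w k * (μ (V₀ ⁻¹' (A k))).toReal := by
      intro k
      rw [integral_indicator_const (w k) (hV₀ (hA k)), smul_eq_mul, mul_comm]
      rfl
    calc ∑ k, w k * (μ (V₀ ⁻¹' (A k))).toReal
        = ∫ ω, ∑ k, (V₀ ⁻¹' (A k)).indicator (fun _ => w k) ω ∂μ := by
          rw [integral_finset_sum _ fun k _ => hint k]
          exact (Finset.sum_congr rfl fun k _ => (h1 k).symm)
      _ ≤ ∫ _, α ∂μ := by
          refine integral_mono (integrable_finset_sum _ fun k _ => hint k)
            (integrable_const α) fun ω => ?_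
          have hb := strange_sum_le w hsum hα0 hα1 (V₀ ω)
          calc ∑ k, (V₀ ⁻¹' (A k)).indicator (fun _ => w k) ω
              = ∑ k, (if Qw w α (V₀ ω) < V₀ ω k then w k else 0) := by
                refine Finset.sum_congr rfl fun k _ => ?_
                simp only [Set.indicator_apply, Set.mem_preimage, hAdef, Set.mem_setOf_eq]
            _ ≤ α := hb
      _ = α := by simp
  -- Assemble
  have hchain : (μ {ω | K ω ∈ strangeSet w α (V (K ω) ω)}).toReal ≤
      ∑ k, w k * ((μ (V₀ ⁻¹' (A k))).toReal + tvDist (μ.map V₀) (μ.map (V k))) := by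
    refine hstep1'.trans ?_
    refine Finset.sum_le_sum fun k _ => ?_
    rw [hstep2 k]
    exact mul_le_mul_of_nonneg_left (hstep3 k) (hw k)
  refine hchain.trans ?_
  have hdist : ∑ k, w k * ((μ (V₀ ⁻¹' (A k))).toReal + tvDist (μ.map V₀) (μ.map (V k))) =
      (∑ k, w k * (μ (V₀ ⁻¹' (A k))).toReal) +
        ∑ k, w k * tvDist (μ.map V₀) (μ.map (V k)) := by
    rw [← Finset.sum_add_distrib]
    exact Finset.sum_congr rfl fun k _ => by ring
  rw [hdist]
  linarith
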